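/- Let F = F₂ be the free group freely generated by a and b, and let 2 = ℤ/2ℤ. Define ψ₀ : 2^F → (2 × 2)^F by ψ₀(x)(f) = (x(f) + x(fa), x(f) + x(fb)) (addition mod 2). Then ψ₀ is continuous and F-equivariant for the left shift actions, ψ₀ is surjective onto (2 × 2)^F, and ψ₀ is exactly 2-to-1: every fiber ψ₀⁻¹(y) has exactly two elements. -/

import Mathlib

/-- The free group on two generators. -/
abbrev F2 := FreeGroup (Fin 2)

/-- The discrete topology on `ZMod 2`. -/
instance : TopologicalSpace (ZMod 2) := ⊥

/-- The left shift action of `G` on the Bernoulli shift `K^G`. -/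
def bshift {G : Type*} [Group G] (K : Type*) (g : G) (x : G → K) : G → K :=
  fun h => x (g⁻¹ * h)

namespace Stmt19Aux

/-- Component selector. -/
def comp (i : Fin 2) (p : ZMod 2 × ZMod 2) : ZMod 2 :=
  if i = 0 then p.1 else p.2

lemma comp_zero (p : ZMod 2 × ZMod 2) : comp 0 p = p.1 := rfl

lemma comp_one (p : ZMod 2 × ZMod 2) : comp 1 p = p.2 := by
  simp [comp]

/-- The auxiliary partial-sum function on words, used to build a preimage of `y`. -/
def Gf (y : F2 → ZMod 2 × ZMod 2) : List (Fin 2 × Bool) → ZMod 2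
  | [] => 0
  | (i, b) :: L =>
      Gf y L +
        comp i (y (if b then (FreeGroup.mk ((i, b) :: L))⁻¹ else (FreeGroup.mk L)⁻¹))

lemma zmod2_cases (a : ZMod 2) : a = 0 ∨ a = 1 := by revert a; decide
lemma zmod2_addA (u t : ZMod 2) : u = u + t + t := by revert u t; decide
lemma zmod2_cancel (a c : ZMod 2) : a + (a + c) = c := by revert a c; decide
lemma zmod2_shuffle (a b : ZMod 2) : a + 1 + (b + 1) = a + b := by revert a b; decide
lemma zmod2_ne (a : ZMod 2) : a ≠ a + 1 := by revert a; decide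
lemma zmod2_sum_swap (a b c e : ZMod 2) (h : a + b = c + e) : b + e = a + c := by
  revert a b c e; decide
lemma zmod2_eq_of_zero (a c : ZMod 2) (h : a + c = 0) : a = c := by revert a c; decide
lemma zmod2_eq_of_one (a c : ZMod 2) (h : a + c = 1) : a = c + 1 := by revert a c; decide

/-- A tail of a reduced word is reduced. -/
lemma tail_reduced {α : Type*} [DecidableEq α] (a : α × Bool) (L : List (α × Bool))
    (h : FreeGroup.reduce (a :: L) = a :: L) : FreeGroup.reduce L = L := by
  rw [FreeGroup.reduce.cons] at h
  rcases hr : FreeGroup.reduce L with _ | ⟨hd, tl⟩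
  · rw [hr] at h
    simp only [List.casesOn] at h
    have : L = [] := by cases h; rfl
    simp [this]
  · rw [hr] at h
    simp only [List.casesOn] at h
    split_ifs at h with hc
    · exfalso
      have hlen : (FreeGroup.reduce L).length ≤ L.length :=
        FreeGroup.Red.length_le FreeGroup.reduce.red
      rw [hr, h] at hlen
      simp only [List.length_cons] at hlen
      omega
    · have : hd :: tl = L := by injection h
      exact this

/-- The key recurrence for `Gf`. -/
lemma Gkey (y : F2 → ZMod 2 × ZMod 2) (i : Fin 2) (b : Bool) (v : F2) :
    Gf y (FreeGroup.toWord (FreeGroup.mk [(i, b)] * v)) =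
      Gf y v.toWord +
        comp i (y (if b then (FreeGroup.mk [(i, b)] * v)⁻¹ else v⁻¹)) := by
  have hmk : FreeGroup.mk [(i, b)] * v = FreeGroup.mk ((i, b) :: v.toWord) := by
    conv_lhs => rw [← FreeGroup.mk_toWord (x := v)]
    rw [FreeGroup.mul_mk, List.singleton_append]
  have hL : FreeGroup.reduce v.toWord = v.toWord := FreeGroup.reduce_toWord v
  have hv : v = FreeGroup.mk v.toWord := (FreeGroup.mk_toWord).symm
  rw [hmk, FreeGroup.toWord_mk]
  rcases hw : v.toWord with _ | ⟨⟨j, c⟩, L'⟩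
  · -- v = 1
    rw [hw] at hv hmk
    have hr1 : FreeGroup.reduce [(i, b)] = [(i, b)] := FreeGroup.reduce_singleton _
    rw [hr1,
      show Gf y [(i, b)] = Gf y [] + comp i (y (if b then (FreeGroup.mk ((i, b) :: []))⁻¹
        else (FreeGroup.mk ([] : List (Fin 2 × Bool)))⁻¹)) from rfl]
    cases b <;> rw [← hv]
  · rw [hw] at hL hv hmk
    have hred : FreeGroup.reduce ((i, b) :: (j, c) :: L') =
        if i = j ∧ b = !c then L' else (i, b) :: (j, c) :: L' := by
      rw [FreeGroup.reduce.cons, hL]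
    rw [hred]
    by_cases hc : i = j ∧ b = !c
    · obtain ⟨rfl, rfl⟩ := hc
      rw [if_pos ⟨rfl, rfl⟩]
      have hmk2 : FreeGroup.mk [(i, !c)] * v = FreeGroup.mk L' := by
        rw [hmk, ← FreeGroup.reduce.self (L := (i, !c) :: (i, c) :: L')]
        congr 1
        rw [hred, if_pos ⟨rfl, rfl⟩]
      rw [show Gf y ((i, c) :: L') = Gf y L' + comp i (y (if c then
        (FreeGroup.mk ((i, c) :: L'))⁻¹ else (FreeGroup.mk L')⁻¹)) from rfl]
      cases c
      · rw [show FreeGroup.mk ((i, !false) :: (i, false) :: L') = FreeGroup.mk L' from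
          hmk.symm.trans hmk2]
        exact zmod2_addA _ _
      · rw [← hv]
        exact zmod2_addA _ _
    · rw [if_neg hc,
        show Gf y ((i, b) :: (j, c) :: L') = Gf y ((j, c) :: L') + comp i (y (if b then
          (FreeGroup.mk ((i, b) :: (j, c) :: L'))⁻¹ else (FreeGroup.mk ((j, c) :: L'))⁻¹))
          from rfl, ← hv]

/-- The constructed preimage. -/
def xf (y : F2 → ZMod 2 × ZMod 2) (f : F2) : ZMod 2 :=
  Gf y (FreeGroup.toWord f⁻¹)

lemma xf_key (y : F2 → ZMod 2 × ZMod 2) (f : F2) (i : Fin 2) :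
    xf y (f * FreeGroup.of i) = xf y f + comp i (y f) := by
  have hinv : (FreeGroup.of i : F2)⁻¹ = FreeGroup.mk [(i, false)] := by
    rw [show (FreeGroup.of i : F2) = FreeGroup.mk [(i, true)] from rfl, FreeGroup.inv_mk]
    rfl
  have h1 : (f * FreeGroup.of i)⁻¹ = FreeGroup.mk [(i, false)] * f⁻¹ := by
    rw [mul_inv_rev, hinv]
  unfold xf
  rw [h1, Gkey y i false f⁻¹]
  simp

/-- `xf y` is a preimage of `y` under `ψ₀`. -/
lemma xf_spec (ψ₀ : (F2 → ZMod 2) → (F2 → ZMod 2 × ZMod 2))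
    (hψ₀ : ∀ (x : F2 → ZMod 2) (f : F2),
      ψ₀ x f = (x f + x (f * FreeGroup.of 0), x f + x (f * FreeGroup.of 1)))
    (y : F2 → ZMod 2 × ZMod 2) : ψ₀ (xf y) = y := by
  funext f
  rw [hψ₀, xf_key y f 0, xf_key y f 1, zmod2_cancel, zmod2_cancel, comp_zero, comp_one]

/-- Functions invariant under right multiplication by generators are constant. -/
lemma const_of_invariant (d : F2 → ZMod 2)
    (h : ∀ (f : F2) (i : Fin 2), d (f * FreeGroup.of i) = d f) (f : F2) : d f = d 1 := by
  have key : ∀ w : F2, ∀ g : F2, d (g * w) = d g := by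
    intro w
    refine FreeGroup.induction_on (C := fun w => ∀ g : F2, d (g * w) = d g) w ?_ ?_ ?_ ?_
    · intro g; rw [mul_one]
    · intro x g; exact h g x
    · intro x _ g
      have := h (g * (FreeGroup.of x)⁻¹) x
      rw [inv_mul_cancel_right] at this
      exact this.symm
    · intro u v hu hv g
      rw [← mul_assoc, hv, hu]
  have := key f 1
  rwa [one_mul] at this

end Stmt19Aux

theorem stmt19 (ψ₀ : (F2 → ZMod 2) → (F2 → ZMod 2 × ZMod 2))
    (hψ₀ : ∀ (x : F2 → ZMod 2) (f : F2),
      ψ₀ x f = (x f + x (f * FreeGroup.of 0), x f + x (f * FreeGroup.of 1))) :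
    Continuous ψ₀ ∧
    (∀ (f : F2) (x : F2 → ZMod 2),
      ψ₀ (bshift (ZMod 2) f x) = bshift (ZMod 2 × ZMod 2) f (ψ₀ x)) ∧
    Function.Surjective ψ₀ ∧
    (∀ y : F2 → ZMod 2 × ZMod 2, (ψ₀ ⁻¹' {y}).ncard = 2) := by
  open Stmt19Aux in
  haveI : DiscreteTopology (ZMod 2) := ⟨rfl⟩
  have hsurj : Function.Surjective ψ₀ := fun y => ⟨xf y, xf_spec ψ₀ hψ₀ y⟩
  refine ⟨?_, ?_, hsurj, ?_⟩
  · -- continuity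
    apply continuous_pi
    intro f
    have : (fun x => ψ₀ x f) = fun x : F2 → ZMod 2 =>
        (x f + x (f * FreeGroup.of 0), x f + x (f * FreeGroup.of 1)) := by
      funext x; exact hψ₀ x f
    rw [this]
    haveI : ContinuousAdd (ZMod 2) := ⟨continuous_of_discreteTopology⟩
    exact Continuous.prodMk
      (Continuous.add (M := ZMod 2) (continuous_apply f) (continuous_apply (f * FreeGroup.of 0)))
      (Continuous.add (M := ZMod 2) (continuous_apply f) (continuous_apply (f * FreeGroup.of 1)))
  · -- equivariance
    intro g x
    funext h
    rw [bshift, hψ₀]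
    show _ = ψ₀ x (g⁻¹ * h)
    rw [hψ₀]
    simp [bshift, mul_assoc]
  · -- fibers
    intro y
    obtain ⟨x₀, hx₀⟩ := hsurj y
    set x₁ : F2 → ZMod 2 := fun f => x₀ f + 1 with hx₁def
    have hx₁ : ψ₀ x₁ = y := by
      funext f
      rw [hψ₀]
      simp only [hx₁def]
      rw [zmod2_shuffle, zmod2_shuffle, ← hψ₀, hx₀]
    have hne : x₀ ≠ x₁ := by
      intro h
      have := congrFun h 1
      exact zmod2_ne _ this
    have hset : ψ₀ ⁻¹' {y} = {x₀, x₁} := by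
      ext x
      simp only [Set.mem_preimage, Set.mem_singleton_iff, Set.mem_insert_iff]
      constructor
      · intro hx
        set d : F2 → ZMod 2 := fun f => x f + x₀ f with hd
        have hdinv : ∀ (f : F2) (i : Fin 2), d (f * FreeGroup.of i) = d f := by
          intro f i
          have h1 := congrFun hx f
          have h2 := congrFun hx₀ f
          rw [hψ₀] at h1 h2
          have h3 : x f + x (f * FreeGroup.of 0) = x₀ f + x₀ (f * FreeGroup.of 0) ∧
              x f + x (f * FreeGroup.of 1) = x₀ f + x₀ (f * FreeGroup.of 1) := by
            constructor
            · have := congrArg Prod.fst (h1.trans h2.symm); exact this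
            · have := congrArg Prod.snd (h1.trans h2.symm); exact this
          fin_cases i
          · exact zmod2_sum_swap _ _ _ _ h3.1
          · exact zmod2_sum_swap _ _ _ _ h3.2
        have hconst := const_of_invariant d hdinv
        rcases zmod2_cases (d 1) with h0 | h1
        · left
          funext f
          have := hconst f
          rw [h0] at this
          exact zmod2_eq_of_zero _ _ this
        · right
          funext f
          have := hconst f
          rw [h1] at this
          exact zmod2_eq_of_one _ _ this
      · rintro (rfl | rfl)
        · exact hx₀
        · exact hx₁
    rw [hset]
    exact Set.ncard_pair hne
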